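/- If two continuous homomorphisms φ, ψ from a compact group K into a topological group U with no small subgroups are sufficiently uniformly close (with respect to a metric on U), then they have equal kernels. -/

import Mathlib

/-- If a topological group `U` (metrized compatibly) has an identity neighborhood `W`
containing no nontrivial subgroup, then there is `ε > 0` such that any two continuous
homomorphisms from a compact group `K` into `U` that are `ε`-close have equal kernels. -/
theorem stmt0 {U : Type*} [Group U] [MetricSpace U] [IsTopologicalGroup U]
    {K : Type*} [Group K] [TopologicalSpace K] [IsTopologicalGroup K] [CompactSpace K]
    (W : Set U) (hW : W ∈ nhds (1 : U))
    (hns : ∀ S : Subgroup U, (S : Set U) ⊆ W → S = ⊥) :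
    ∃ ε > (0 : ℝ), ∀ φ ψ : K →* U, Continuous φ → Continuous ψ →
      (∀ x : K, dist (φ x) (ψ x) < ε) → φ.ker = ψ.ker := by
  obtain ⟨ε, hε, hball⟩ := Metric.mem_nhds_iff.mp hW
  refine ⟨ε, hε, ?_⟩
  have key : ∀ φ ψ : K →* U, (∀ x : K, dist (φ x) (ψ x) < ε) → φ.ker ≤ ψ.ker := by
    intro φ ψ hclose
    have hS : ((φ.ker.map ψ : Subgroup U) : Set U) ⊆ W := by
      rintro _ ⟨x, hx, rfl⟩
      apply hball
      have hx1 : φ x = 1 := hx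
      simpa [Metric.mem_ball, dist_comm, hx1] using hclose x
    have := hns _ hS
    intro x hx
    have : ψ x ∈ φ.ker.map ψ := ⟨x, hx, rfl⟩
    rw [hns _ hS] at this
    simpa [Subgroup.mem_bot] using this
  intro φ ψ _ _ hclose
  refine le_antisymm (key φ ψ hclose) (key ψ φ ?_)
  intro x; simpa [dist_comm] using hclose x
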